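/- Let L be a first-order language, φ an L-sentence, ι an index type, D an ultrafilter on ι, and (Mᵢ)ᵢ a family of nonempty L-structures. If the set of indices i such that Mᵢ has a nonempty substructure satisfying φ belongs to D, then the ultraproduct ∏_D Mᵢ has a nonempty substructure satisfying φ. In other words, θ(φ) is preserved under ultraproducts. -/

import Mathlib

open FirstOrder Language Filter Structure

section ThetaAux

variable {L : FirstOrder.Language} {ι : Type*} (D : Ultrafilter ι) (M : ι → Type*)
  [∀ i, L.Structure (M i)]

/-- The coordinatewise inclusion map. -/
def prodSubFun (S : ∀ i, L.Substructure (M i)) :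
    ((D : Filter ι).Product (fun i => (S i : Type _))) → ((D : Filter ι).Product M) :=
  Quotient.map (fun x i => ((x i : S i) : M i))
    (fun _ _ hab => hab.mono fun i hi => congrArg _ hi)

theorem prodSubFun_mk (S : ∀ i, L.Substructure (M i)) (x : ∀ i, S i) :
    prodSubFun D M S (x : (D : Filter ι).Product (fun i => (S i : Type _))) =
      ((fun i => ((x i : S i) : M i)) : (D : Filter ι).Product M) := rfl

/-- The coordinatewise inclusion of an ultraproduct of substructures into the ultraproduct. -/
noncomputable def prodSubEmb (S : ∀ i, L.Substructure (M i)) :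
    ((D : Filter ι).Product (fun i => (S i : Type _))) ↪[L] ((D : Filter ι).Product M) where
  toFun := prodSubFun D M S
  inj' := by
    rintro ⟨a⟩ ⟨b⟩ hab
    exact Quotient.sound ((Quotient.exact hab).mono fun i hi => Subtype.ext hi)
  map_fun' := by
    intro n f x
    choose y hy using fun k => Quotient.exists_rep (x k)
    have hx : x = fun k => (y k : (D : Filter ι).Product (fun i => (S i : Type _))) :=
      funext fun k => (hy k).symm
    subst hx
    calc prodSubFun D M S (funMap f fun k =>
            (y k : (D : Filter ι).Product (fun i => (S i : Type _))))
        = prodSubFun D M S ((fun a => funMap f fun k => y k a :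
            (D : Filter ι).Product (fun i => (S i : Type _)))) := by
          exact congrArg (prodSubFun D M S) (Ultraproduct.funMap_cast f y)
      _ = (show (D : Filter ι).Product M from
          ((fun a => funMap f fun k => ((y k a : S a) : M a)) : (D : Filter ι).Product M)) := rfl
      _ = funMap f (fun k => (show (D : Filter ι).Product M from
            ((fun a => ((y k a : S a) : M a)) : (D : Filter ι).Product M))) :=
          (Ultraproduct.funMap_cast f fun k a => ((y k a : S a) : M a)).symm
      _ = funMap f (fun k => prodSubFun D M S
            (y k : (D : Filter ι).Product (fun i => (S i : Type _)))) := rfl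
  map_rel' := by
    intro n r x
    choose y hy using fun k => Quotient.exists_rep (x k)
    have hx : x = fun k => (y k : (D : Filter ι).Product (fun i => (S i : Type _))) :=
      funext fun k => (hy k).symm
    subst hx
    letI s1 := (D : Filter ι).productSetoid M
    letI s2 := (D : Filter ι).productSetoid (fun i => (S i : Type _))
    exact Iff.trans (relMap_quotient_mk' s1 r (fun k a => ((y k a : S a) : M a)))
      (relMap_quotient_mk' s2 r y).symm

end ThetaAux

/-- `θ(φ)` is preserved under ultraproducts: if `D`-almost every `Mᵢ` has a
nonempty substructure satisfying `φ`, then so does the ultraproduct `∏_D Mᵢ`. -/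
theorem theta_preserved_under_ultraproducts {L : FirstOrder.Language} {ι : Type*}
    (D : Ultrafilter ι) (M : ι → Type*) [∀ i, L.Structure (M i)] [∀ i, Nonempty (M i)]
    (φ : L.Sentence)
    (h : {i : ι | ∃ S : L.Substructure (M i), (S : Set (M i)).Nonempty ∧ (S : Type _) ⊨ φ} ∈ D) :
    ∃ S : L.Substructure ((D : Filter ι).Product M),
      (S : Set ((D : Filter ι).Product M)).Nonempty ∧ (S : Type _) ⊨ φ := by
  classical
  have hS : ∀ i, ∃ S : L.Substructure (M i), (S : Set (M i)).Nonempty ∧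
      (i ∈ {i : ι | ∃ S : L.Substructure (M i), (S : Set (M i)).Nonempty ∧ (S : Type _) ⊨ φ} →
        (S : Type _) ⊨ φ) := by
    intro i
    by_cases hi : i ∈ {i : ι | ∃ S : L.Substructure (M i),
        (S : Set (M i)).Nonempty ∧ (S : Type _) ⊨ φ}
    · obtain ⟨S, hne, hφ⟩ := hi
      exact ⟨S, hne, fun _ => hφ⟩
    · exact ⟨⊤, ⟨Classical.arbitrary _, trivial⟩, fun hi' => absurd hi' hi⟩
  choose S hne hφS using hS
  haveI : ∀ i, Nonempty (S i) := fun i => (hne i).to_subtype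
  have hU : (D : Filter ι).Product (fun i => (S i : Type _)) ⊨ φ :=
    (Ultraproduct.sentence_realize φ).2 (Filter.mem_of_superset h fun i hi => hφS i hi)
  let e := prodSubEmb D M S
  refine ⟨e.toHom.range, ⟨e (Classical.arbitrary _), ⟨Classical.arbitrary _, rfl⟩⟩, ?_⟩
  have := e.equivRange
  exact (StrongHomClass.realize_sentence this φ).1 hU
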